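/- Let sequences {xᵏ} ⊂ ℝⁿ, {λ̄ᵏ} ⊂ [λ_min, λ_max]ᵐ, {r_k} ⊂ (0, ∞), {t_k} ⊂ (0, ∞), {ε_k} with ε_k ↓ 0, and {s_k} ⊂ (0, ∞) bounded be generated by Algorithm 3: (x^{k+1}, t_{k+1}) ∈ ℝⁿ × (0, ∞) satisfies ‖∇L̂^{s_k}_{λ̄ᵏ, r_k}(x^{k+1}, t_{k+1})‖ ≤ ε_k; and r_{k+1} = r_k if ‖h(x^{k+1})‖ ≤ τ ‖h(xᵏ)‖, r_{k+1} = γ r_k otherwise, where 0 < τ < 1 and γ > 1. Let x̄ be a limit point of {xᵏ}. Then: (a) if {r_k} is bounded, x̄ is a stationary point of (NLP), i.e. h(x̄) = 0 and there exists μ ∈ ℝᵐ with ∇f(x̄) + ∇h(x̄) μ = 0; (b) if {r_k} is unbounded, ∇h(x̄) h(x̄) = 0. -/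

import Mathlib

open Filter

private lemma coord_le_norm' {m : ℕ} (v : EuclideanSpace ℝ (Fin m)) (i : Fin m) : |v i| ≤ ‖v‖ := by
  rw [EuclideanSpace.norm_eq v, ← Real.sqrt_sq_eq_abs]
  apply Real.sqrt_le_sqrt
  refine Finset.single_le_sum (f := fun j => ‖v j‖ ^ 2) (fun j _ => sq_nonneg _)
    (Finset.mem_univ i) |>.trans_eq' ?_
  simp [Real.norm_eq_abs, sq_abs]

private lemma sqrt_bound' {E : Type*} [NormedAddCommGroup E] (a : E) (c ε : ℝ)
    (hx : Real.sqrt (‖a‖ ^ 2 + c ^ 2) ≤ ε) : ‖a‖ ≤ ε ∧ |c| ≤ ε := by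
  constructor
  · calc ‖a‖ = Real.sqrt (‖a‖ ^ 2) := (Real.sqrt_sq (norm_nonneg _)).symm
      _ ≤ Real.sqrt (‖a‖ ^ 2 + c ^ 2) := Real.sqrt_le_sqrt (le_add_of_nonneg_right (sq_nonneg _))
      _ ≤ ε := hx
  · calc |c| = Real.sqrt (c ^ 2) := (Real.sqrt_sq_eq_abs _).symm
      _ ≤ Real.sqrt (‖a‖ ^ 2 + c ^ 2) := Real.sqrt_le_sqrt (le_add_of_nonneg_left (sq_nonneg _))
      _ ≤ ε := hx

set_option maxHeartbeats 1000000 in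
theorem stmt17 {n m : ℕ} (f : EuclideanSpace ℝ (Fin n) → ℝ)
    (h : EuclideanSpace ℝ (Fin n) → EuclideanSpace ℝ (Fin m))
    (hf : ContDiff ℝ 2 f) (hh : ContDiff ℝ 2 h)
    (lammin lammax τ γ : ℝ) (hlm : lammin < lammax)
    (hτ0 : 0 < τ) (hτ1 : τ < 1) (hγ : 1 < γ)
    (x : ℕ → EuclideanSpace ℝ (Fin n)) (lamb : ℕ → EuclideanSpace ℝ (Fin m))
    (rr t eps s : ℕ → ℝ)
    (hbox : ∀ k i, lammin ≤ lamb k i ∧ lamb k i ≤ lammax)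
    (hrpos : ∀ k, 0 < rr k)
    (hepspos : ∀ k, 0 < eps k) (hepsanti : Antitone eps)
    (hepslim : Tendsto eps atTop (nhds 0))
    (hspos : ∀ k, 0 < s k) (hsbdd : ∃ S, ∀ k, s k ≤ S)
    (hstat : ∀ k, 0 < t (k + 1) ∧
      Real.sqrt
        (‖gradient f (x (k + 1)) +
            ∑ i, (lamb k i + (rr k / t (k + 1)) * h (x (k + 1)) i) •
              gradient (fun y => h y i) (x (k + 1))‖ ^ 2 +
          ((rr k / 2) *
            (1 - (‖h (x (k + 1))‖ ^ 2 + s k ^ 2) / t (k + 1) ^ 2)) ^ 2) ≤ eps k)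
    (hpen : ∀ k, rr (k + 1) =
      if ‖h (x (k + 1))‖ ≤ τ * ‖h (x k)‖ then rr k else γ * rr k)
    (xbar : EuclideanSpace ℝ (Fin n)) (φ : ℕ → ℕ) (hφ : StrictMono φ)
    (hlim : Tendsto (fun j => x (φ j)) atTop (nhds xbar)) :
    ((∃ B, ∀ k, rr k ≤ B) →
      h xbar = 0 ∧
      ∃ μ : EuclideanSpace ℝ (Fin m),
        gradient f xbar + ∑ i, μ i • gradient (fun y => h y i) xbar = 0) ∧
    ((¬ ∃ B, ∀ k, rr k ≤ B) →
      ∑ i, h xbar i • gradient (fun y => h y i) xbar = 0) := by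
  classical
  -- abbreviations
  set g : Fin m → EuclideanSpace ℝ (Fin n) → EuclideanSpace ℝ (Fin n) :=
    fun i => gradient (fun y => h y i) with hgdef
  -- smoothness / continuity facts
  have hhi : ∀ i, ContDiff ℝ 2 (fun y => h y i) := fun i => by
    simpa [Function.comp_def] using (EuclideanSpace.proj i).contDiff.comp hh
  have hgradf : Continuous (gradient f) :=
    (InnerProductSpace.toDual ℝ _).symm.continuous.comp (hf.continuous_fderiv (by norm_num))
  have hgradh : ∀ i, Continuous (g i) := fun i =>
    (InnerProductSpace.toDual ℝ _).symm.continuous.comp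
      ((hhi i).continuous_fderiv (by norm_num))
  have hch : Continuous h := hh.continuous
  -- the two pieces of the stationarity estimate
  have hstat' : ∀ k,
      ‖gradient f (x (k + 1)) +
          ∑ i, (lamb k i + (rr k / t (k + 1)) * h (x (k + 1)) i) • g i (x (k + 1))‖ ≤ eps k ∧
      |(rr k / 2) * (1 - (‖h (x (k + 1))‖ ^ 2 + s k ^ 2) / t (k + 1) ^ 2)| ≤ eps k :=
    fun k => sqrt_bound' _ _ _ (hstat k).2
  -- rr is monotone
  have hrmono : Monotone rr := monotone_nat_of_le_succ fun k => by
    rw [hpen k]; split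
    · exact le_rfl
    · nlinarith [hrpos k]
  -- shifted subsequence so that every index is positive
  set ψ : ℕ → ℕ := fun j => φ (j + 1) with hψdef
  set kk : ℕ → ℕ := fun j => ψ j - 1 with hkkdef
  have hψge : ∀ j, j + 1 ≤ ψ j := fun j => hφ.le_apply
  have hkk1 : ∀ j, kk j + 1 = ψ j := fun j => by
    have := hψge j; simp only [hkkdef]; omega
  have hkktop : Tendsto kk atTop atTop :=
    tendsto_atTop_mono (fun j => by have := hψge j; simp only [hkkdef, id]; omega) tendsto_id
  have hψtop : Tendsto ψ atTop atTop :=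
    tendsto_atTop_mono (fun j => by have := hψge j; simp only [id]; omega) tendsto_id
  have hxψ : Tendsto (fun j => x (ψ j)) atTop (nhds xbar) :=
    hlim.comp (tendsto_add_atTop_nat 1)
  have hepskk : Tendsto (fun j => eps (kk j)) atTop (nhds 0) := hepslim.comp hkktop
  have htpos : ∀ j, 0 < t (ψ j) := fun j => by
    have := (hstat (kk j)).1; rwa [hkk1 j] at this
  -- limits of the gradient data along the subsequence
  have hgf : Tendsto (fun j => gradient f (x (ψ j))) atTop (nhds (gradient f xbar)) :=
    (hgradf.tendsto xbar).comp hxψ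
  have hgh : ∀ i, Tendsto (fun j => g i (x (ψ j))) atTop (nhds (g i xbar)) := fun i =>
    ((hgradh i).tendsto xbar).comp hxψ
  have hhx : Tendsto (fun j => h (x (ψ j))) atTop (nhds (h xbar)) :=
    (hch.tendsto xbar).comp hxψ
  -- bound on the multipliers in the box
  set ML : ℝ := max |lammin| |lammax| with hMLdef
  have hML0 : 0 ≤ ML := le_trans (abs_nonneg _) (le_max_left _ _)
  have hlb : ∀ k i, |lamb k i| ≤ ML := by
    intro k i
    rcases hbox k i with ⟨h1, h2⟩
    rw [abs_le]
    constructor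
    · calc -ML ≤ -|lammin| := neg_le_neg (le_max_left _ _)
        _ ≤ lammin := neg_abs_le _
        _ ≤ lamb k i := h1
    · exact h2.trans ((le_abs_self _).trans (le_max_right _ _))
  constructor
  · rintro ⟨B, hB⟩
    -- eventually the penalty parameter is not increased
    have hKex : ∃ K, ∀ k, K ≤ k → ‖h (x (k + 1))‖ ≤ τ * ‖h (x k)‖ := by
      by_contra hcon
      push_neg at hcon
      have key : ∀ c : ℕ, ∃ k, rr 0 * γ ^ c ≤ rr k := by
        intro c
        induction c with
        | zero => exact ⟨0, by simp⟩
        | succ c ih =>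
          obtain ⟨k, hk⟩ := ih
          obtain ⟨k', hk', hlt⟩ := hcon k
          refine ⟨k' + 1, ?_⟩
          rw [hpen k', if_neg (not_le.mpr hlt)]
          have h1 : rr k ≤ rr k' := hrmono hk'
          have hγ0 : (0:ℝ) < γ := by linarith
          have h2 : 0 < rr 0 := hrpos 0
          calc rr 0 * γ ^ (c + 1) = γ * (rr 0 * γ ^ c) := by ring
            _ ≤ γ * rr k' := by nlinarith [pow_pos hγ0 c]
      obtain ⟨c, hc⟩ := ((tendsto_pow_atTop_atTop_of_one_lt hγ).eventually_ge_atTop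
        ((B + 1) / rr 0)).exists
      obtain ⟨k, hk⟩ := key c
      have h2 : 0 < rr 0 := hrpos 0
      rw [div_le_iff₀ h2] at hc
      have h3 := hB k
      nlinarith
    obtain ⟨K, hK⟩ := hKex
    -- geometric decay of the constraint violation
    have hdec : ∀ jj : ℕ, ‖h (x (K + jj))‖ ≤ τ ^ jj * ‖h (x K)‖ := by
      intro jj
      induction jj with
      | zero => simp
      | succ jj ih =>
        calc ‖h (x (K + (jj + 1)))‖ ≤ τ * ‖h (x (K + jj))‖ := hK (K + jj) (Nat.le_add_right _ _)
          _ ≤ τ * (τ ^ jj * ‖h (x K)‖) := mul_le_mul_of_nonneg_left ih hτ0.le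
          _ = τ ^ (jj + 1) * ‖h (x K)‖ := by ring
    have hh0 : Tendsto (fun k => ‖h (x k)‖) atTop (nhds 0) := by
      have hb : ∀ᶠ k in atTop, ‖h (x k)‖ ≤ τ ^ (k - K) * ‖h (x K)‖ := by
        filter_upwards [eventually_ge_atTop K] with k hk
        have h1 := hdec (k - K)
        rwa [Nat.add_sub_cancel' hk] at h1
      refine squeeze_zero' (Eventually.of_forall fun k => norm_nonneg _) hb ?_
      have h1 : Tendsto (fun k : ℕ => τ ^ (k - K)) atTop (nhds 0) :=
        (tendsto_pow_atTop_nhds_zero_of_lt_one hτ0.le hτ1).comp (tendsto_sub_atTop_nat K)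
      have h2 := h1.mul_const ‖h (x K)‖
      rwa [zero_mul] at h2
    have hhbar : h xbar = 0 := by
      have h1 : Tendsto (fun j => ‖h (x (ψ j))‖) atTop (nhds ‖h xbar‖) := hhx.norm
      have h2 : Tendsto (fun j => ‖h (x (ψ j))‖) atTop (nhds 0) := hh0.comp hψtop
      exact norm_eq_zero.mp (tendsto_nhds_unique h1 h2)
    -- the penalty parameter is eventually constant
    have hrc : ∀ k, K ≤ k → rr k = rr K :=
      Nat.le_induction rfl (fun k hk ih => by rw [hpen k, if_pos (hK k hk), ih])
    -- bound on the multipliers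
    set D : ℝ := 1 + 2 * eps 0 / rr K with hDdef
    have hD1 : (1:ℝ) ≤ D := by
      have h1 := hepspos 0
      have h2 := hrpos K
      have h3 : 0 < 2 * eps 0 / rr K := by positivity
      simp only [hDdef]; linarith
    set Mb : ℝ := ML + rr K * Real.sqrt D with hMbdef
    have hμb : ∀ᶠ j in atTop, ∀ i,
        |lamb (kk j) i + (rr (kk j) / t (ψ j)) * h (x (ψ j)) i| ≤ Mb := by
      filter_upwards [hkktop.eventually_ge_atTop K] with j hj i
      have hrj : rr (kk j) = rr K := hrc _ hj
      have ht := htpos j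
      have hrK := hrpos K
      have hrkj := hrpos (kk j)
      have h2 := (hstat' (kk j)).2
      rw [hkk1 j] at h2
      rw [abs_mul, abs_of_pos (by positivity : (0:ℝ) < rr (kk j) / 2)] at h2
      have hda : |1 - (‖h (x (ψ j))‖ ^ 2 + s (kk j) ^ 2) / t (ψ j) ^ 2| ≤ 2 * eps 0 / rr K := by
        rw [← hrj, le_div_iff₀ (hrpos (kk j))]
        have he : eps (kk j) ≤ eps 0 := hepsanti (Nat.zero_le _)
        nlinarith [abs_nonneg (1 - (‖h (x (ψ j))‖ ^ 2 + s (kk j) ^ 2) / t (ψ j) ^ 2)]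
      have hratio : ‖h (x (ψ j))‖ / t (ψ j) ≤ Real.sqrt D := by
        rw [abs_le] at hda
        have h5 : (‖h (x (ψ j))‖ ^ 2 + s (kk j) ^ 2) / t (ψ j) ^ 2 ≤ D := by
          simp only [hDdef]; linarith [hda.1]
        have h6 : ‖h (x (ψ j))‖ ^ 2 / t (ψ j) ^ 2 ≤ D := by
          refine le_trans ?_ h5
          gcongr
          nlinarith [sq_nonneg (s (kk j))]
        rw [Real.le_sqrt (by positivity)] <;> try linarith
        rwa [div_pow]
      have hcoord : |h (x (ψ j)) i| ≤ ‖h (x (ψ j))‖ := coord_le_norm' _ i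
      have habs : |lamb (kk j) i + (rr (kk j) / t (ψ j)) * h (x (ψ j)) i|
          ≤ |lamb (kk j) i| + (rr (kk j) / t (ψ j)) * |h (x (ψ j)) i| := by
        refine (abs_add_le _ _).trans ?_
        rw [abs_mul, abs_of_pos (by positivity : (0:ℝ) < rr (kk j) / t (ψ j))]
      refine habs.trans ?_
      simp only [hMbdef]
      have h7 : (rr (kk j) / t (ψ j)) * |h (x (ψ j)) i| ≤ rr K * Real.sqrt D := by
        rw [hrj]
        calc rr K / t (ψ j) * |h (x (ψ j)) i| ≤ rr K / t (ψ j) * ‖h (x (ψ j))‖ :=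
              mul_le_mul_of_nonneg_left hcoord (by positivity)
          _ = rr K * (‖h (x (ψ j))‖ / t (ψ j)) := by ring
          _ ≤ rr K * Real.sqrt D := mul_le_mul_of_nonneg_left hratio hrK.le
      linarith [hlb (kk j) i]
    -- closed affine subspace argument
    refine ⟨hhbar, ?_⟩
    set L : EuclideanSpace ℝ (Fin m) →ₗ[ℝ] EuclideanSpace ℝ (Fin n) :=
      { toFun := fun μ => ∑ i, μ i • g i xbar,
        map_add' := fun a b => by
          simp [PiLp.add_apply, add_smul, Finset.sum_add_distrib]
        map_smul' := fun c a => by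
          simp [PiLp.smul_apply, Finset.smul_sum, smul_smul] } with hLdef
    set μseq : ℕ → EuclideanSpace ℝ (Fin m) :=
      fun j => WithLp.toLp 2 (fun i => lamb (kk j) i + (rr (kk j) / t (ψ j)) * h (x (ψ j)) i) with hμdef
    have hGb : ∀ j, ‖gradient f (x (ψ j)) + ∑ i, μseq j i • g i (x (ψ j))‖ ≤ eps (kk j) := by
      intro j
      have h1 := (hstat' (kk j)).1
      rw [hkk1 j] at h1
      exact h1
    have hident : ∀ j, gradient f xbar + L (μseq j) =
        (gradient f (x (ψ j)) + ∑ i, μseq j i • g i (x (ψ j)))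
          + (gradient f xbar - gradient f (x (ψ j)))
          + ∑ i, μseq j i • (g i xbar - g i (x (ψ j))) := by
      intro j
      simp only [hLdef, LinearMap.coe_mk, AddHom.coe_mk, smul_sub, Finset.sum_sub_distrib]
      abel
    have hv0 : Tendsto (fun j => gradient f xbar + L (μseq j)) atTop (nhds 0) := by
      have t1 : Tendsto (fun j => gradient f (x (ψ j)) + ∑ i, μseq j i • g i (x (ψ j)))
          atTop (nhds 0) := squeeze_zero_norm hGb hepskk
      have t2 : Tendsto (fun j => gradient f xbar - gradient f (x (ψ j))) atTop (nhds 0) := by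
        have h1 : Tendsto (fun _ : ℕ => gradient f xbar) atTop (nhds (gradient f xbar)) :=
          tendsto_const_nhds
        have h2 := h1.sub hgf
        rwa [sub_self] at h2
      have t3 : Tendsto (fun j => ∑ i, μseq j i • (g i xbar - g i (x (ψ j)))) atTop
          (nhds (∑ i : Fin m, (0 : EuclideanSpace ℝ (Fin n)))) := by
        refine tendsto_finset_sum _ fun i _ => ?_
        refine squeeze_zero_norm'
          (a := fun j => Mb * ‖g i xbar - g i (x (ψ j))‖) ?_ ?_
        · filter_upwards [hμb] with j hj
          rw [norm_smul, Real.norm_eq_abs]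
          exact mul_le_mul_of_nonneg_right (hj i) (norm_nonneg _)
        · have hd : Tendsto (fun j => g i xbar - g i (x (ψ j))) atTop (nhds 0) := by
            have h1 : Tendsto (fun _ : ℕ => g i xbar) atTop (nhds (g i xbar)) :=
              tendsto_const_nhds
            have h2 := h1.sub (hgh i)
            rwa [sub_self] at h2
          have h2 := hd.norm.const_mul Mb
          rw [norm_zero, mul_zero] at h2
          exact h2
      rw [Finset.sum_const_zero] at t3
      have hsum := (t1.add t2).add t3
      rw [add_zero, add_zero] at hsum
      exact Tendsto.congr (fun j => (hident j).symm) hsum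
    have hclosed : IsClosed ((fun v => gradient f xbar + v) ''
        (LinearMap.range L : Set (EuclideanSpace ℝ (Fin n)))) :=
      (Homeomorph.addLeft (gradient f xbar)).isClosedMap _
        (Submodule.closed_of_finiteDimensional _)
    have hmem : (0 : EuclideanSpace ℝ (Fin n)) ∈ (fun v => gradient f xbar + v) ''
        (LinearMap.range L : Set (EuclideanSpace ℝ (Fin n))) := by
      refine hclosed.mem_of_tendsto hv0 (Eventually.of_forall fun j => ?_)
      exact ⟨L (μseq j), LinearMap.mem_range_self _ _, rfl⟩
    obtain ⟨v, hvr, heq⟩ := hmem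
    obtain ⟨μ, rfl⟩ := hvr
    exact ⟨μ, heq⟩
  · intro hub
    have hrtop : Tendsto rr atTop atTop := by
      refine tendsto_atTop_atTop_of_monotone hrmono ?_
      push_neg at hub
      intro b
      obtain ⟨k, hk⟩ := hub b
      exact ⟨k, hk.le⟩
    have hrk : Tendsto (fun j => rr (kk j)) atTop atTop := hrtop.comp hkktop
    obtain ⟨S0, hS0⟩ := hsbdd
    have hS0pos : 0 < S0 := (hspos 0).trans_le (hS0 0)
    set C : ℝ := (‖h xbar‖ + 1) ^ 2 + S0 ^ 2 with hCdef
    have hCpos : 0 < C := by positivity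
    have hAb : ∀ᶠ j in atTop, ‖h (x (ψ j))‖ ^ 2 + s (kk j) ^ 2 ≤ C := by
      have h1 : ∀ᶠ j in atTop, ‖h (x (ψ j))‖ < ‖h xbar‖ + 1 :=
        hhx.norm.eventually_lt_const (lt_add_one _)
      filter_upwards [h1] with j hj
      have h2 := hS0 (kk j); have h3 := hspos (kk j)
      have h4 := norm_nonneg (h (x (ψ j)))
      nlinarith
    have hδ : ∀ᶠ j in atTop, 2 * eps (kk j) / rr (kk j) ≤ 1 / 2 := by
      filter_upwards [hrk.eventually_ge_atTop (8 * eps 0)] with j hj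
      have h1 : eps (kk j) ≤ eps 0 := hepsanti (Nat.zero_le _)
      have h2 : 0 < rr (kk j) := hrpos _
      have h3 : 0 < eps 0 := hepspos 0
      rw [div_le_iff₀ h2]
      nlinarith
    have hTb : ∀ j, |1 - (‖h (x (ψ j))‖ ^ 2 + s (kk j) ^ 2) / t (ψ j) ^ 2|
        ≤ 2 * eps (kk j) / rr (kk j) := by
      intro j
      have h2 := (hstat' (kk j)).2
      rw [hkk1 j] at h2
      have hr := hrpos (kk j)
      rw [abs_mul, abs_of_pos (by positivity : (0:ℝ) < rr (kk j) / 2)] at h2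
      rw [le_div_iff₀ hr]
      nlinarith [abs_nonneg (1 - (‖h (x (ψ j))‖ ^ 2 + s (kk j) ^ 2) / t (ψ j) ^ 2)]
    have htb : ∀ᶠ j in atTop, t (ψ j) ≤ Real.sqrt (2 * C) := by
      filter_upwards [hAb, hδ] with j h1 h2
      have h3 := (hTb j).trans h2
      have ht := htpos j
      rw [abs_le] at h3
      have h5 : (1:ℝ)/2 ≤ (‖h (x (ψ j))‖ ^ 2 + s (kk j) ^ 2) / t (ψ j) ^ 2 := by
        linarith [h3.2]
      rw [le_div_iff₀ (by positivity)] at h5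
      have h4 : t (ψ j) ^ 2 ≤ 2 * C := by nlinarith
      calc t (ψ j) = Real.sqrt (t (ψ j) ^ 2) := (Real.sqrt_sq ht.le).symm
        _ ≤ Real.sqrt (2 * C) := Real.sqrt_le_sqrt h4
    set q : ℕ → ℝ := fun j => t (ψ j) / rr (kk j) with hqdef
    have hqpos : ∀ j, 0 < q j := fun j => div_pos (htpos j) (hrpos _)
    have hq0 : Tendsto q atTop (nhds 0) := by
      refine squeeze_zero' (Eventually.of_forall fun j => (hqpos j).le) ?_
        (Tendsto.div_atTop (tendsto_const_nhds (x := Real.sqrt (2 * C))) hrk)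
      filter_upwards [htb] with j hj
      simp only [hqdef]
      gcongr
      exact (hrpos _).le
    have hwid : ∀ j, ∑ i, h (x (ψ j)) i • g i (x (ψ j)) =
        q j • ((gradient f (x (ψ j)) +
            ∑ i, (lamb (kk j) i + (rr (kk j) / t (ψ j)) * h (x (ψ j)) i) • g i (x (ψ j)))
          - gradient f (x (ψ j)) - ∑ i, lamb (kk j) i • g i (x (ψ j))) := by
      intro j
      have ht := (htpos j).ne'
      have hr := (hrpos (kk j)).ne'
      rw [add_sub_cancel_left, ← Finset.sum_sub_distrib, Finset.smul_sum]
      refine Finset.sum_congr rfl fun i _ => ?_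
      rw [add_smul, add_sub_cancel_left, smul_smul]
      congr 1
      simp only [hqdef]
      field_simp
    set U : ℝ := eps 0 + (‖gradient f xbar‖ + 1) + ∑ i, ML * (‖g i xbar‖ + 1) with hUdef
    have hU : ∀ᶠ j in atTop, ‖∑ i, h (x (ψ j)) i • g i (x (ψ j))‖ ≤ q j * U := by
      have h1 : ∀ᶠ j in atTop, ‖gradient f (x (ψ j))‖ < ‖gradient f xbar‖ + 1 :=
        hgf.norm.eventually_lt_const (lt_add_one _)
      have h2 : ∀ᶠ j in atTop, ∀ i, ‖g i (x (ψ j))‖ < ‖g i xbar‖ + 1 :=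
        eventually_all.mpr fun i => (hgh i).norm.eventually_lt_const (lt_add_one _)
      filter_upwards [h1, h2] with j hj1 hj2
      rw [hwid j, norm_smul, Real.norm_eq_abs, abs_of_pos (hqpos j)]
      refine mul_le_mul_of_nonneg_left ?_ (hqpos j).le
      have hG := (hstat' (kk j)).1
      rw [hkk1 j] at hG
      refine le_trans ((norm_sub_le _ _).trans (add_le_add (norm_sub_le _ _) le_rfl)) ?_
      rw [hUdef]
      have hb3 : ‖∑ i, lamb (kk j) i • g i (x (ψ j))‖ ≤ ∑ i, ML * (‖g i xbar‖ + 1) := by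
        refine (norm_sum_le _ _).trans (Finset.sum_le_sum fun i _ => ?_)
        rw [norm_smul, Real.norm_eq_abs]
        exact mul_le_mul (hlb _ i) (hj2 i).le (norm_nonneg _) hML0
      have hb1 : eps (kk j) ≤ eps 0 := hepsanti (Nat.zero_le _)
      exact add_le_add (add_le_add (hG.trans hb1) hj1.le) hb3
    have hw0 : Tendsto (fun j => ∑ i, h (x (ψ j)) i • g i (x (ψ j))) atTop (nhds 0) := by
      refine squeeze_zero_norm' hU ?_
      have h0 := hq0.mul_const U
      rwa [zero_mul] at h0
    have hwlim : Tendsto (fun j => ∑ i, h (x (ψ j)) i • g i (x (ψ j))) atTop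
        (nhds (∑ i, h xbar i • g i xbar)) := by
      refine tendsto_finset_sum _ fun i _ => Tendsto.smul ?_ (hgh i)
      exact ((hhi i).continuous.tendsto xbar).comp hxψ
    exact tendsto_nhds_unique hwlim hw0
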